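/- Let Ω be a domain in ℝ^N, let t > 1, let r ∈ [1, t], and let (w_m) be a bounded sequence in L^t(Ω) converging almost everywhere on Ω to a function w. Then ∫_Ω | |w_m|^r - |w_m - w|^r - |w|^r |^{t/r} dx → 0 as m → ∞. -/

import Mathlib

open MeasureTheory Filter
open scoped ENNReal NNReal

private lemma bl_mvt {r : ℝ} (hr : 1 ≤ r) {x y : ℝ} (hy : 0 ≤ y) (hxy : y ≤ x) :
    x ^ r - y ^ r ≤ r * x ^ (r - 1) * (x - y) := by
  have hx : 0 ≤ x := hy.trans hxy
  rcases eq_or_lt_of_le hx with h | hx0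
  · have hx0 : x = 0 := h.symm
    have hy0 : y = 0 := le_antisymm (hx0 ▸ hxy) hy
    have hr0 : r ≠ 0 := by positivity
    simp [hx0, hy0, Real.zero_rpow hr0]
  · have hs : -1 ≤ y / x - 1 := by
      have : 0 ≤ y / x := div_nonneg hy hx
      linarith
    have hb := one_add_mul_self_le_rpow_one_add hs hr
    have h1x : (1 : ℝ) + (y / x - 1) = y / x := by ring
    rw [h1x, Real.div_rpow hy hx] at hb
    have hxr : 0 < x ^ r := Real.rpow_pos_of_pos hx0 r
    have key : x ^ r * (1 + r * (y / x - 1)) ≤ y ^ r := by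
      have h := mul_le_mul_of_nonneg_left hb hxr.le
      have h2 : x ^ r * (y ^ r / x ^ r) = y ^ r := by field_simp
      linarith
    have hdiv : x ^ (r - 1) = x ^ r / x := by
      rw [Real.rpow_sub hx0, Real.rpow_one]
    have heq : r * x ^ (r - 1) * (x - y) = -(x ^ r * (r * (y / x - 1))) := by
      rw [hdiv]; field_simp; ring
    nlinarith [key]

private lemma bl_mvt_abs {r : ℝ} (hr : 1 ≤ r) {x y : ℝ} (hx : 0 ≤ x) (hy : 0 ≤ y) :
    |x ^ r - y ^ r| ≤ r * (max x y) ^ (r - 1) * |x - y| := by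
  rcases le_total y x with h | h
  · rw [abs_of_nonneg (sub_nonneg.2 (Real.rpow_le_rpow hy h (by positivity))),
      max_eq_left h, abs_of_nonneg (sub_nonneg.2 h)]
    exact bl_mvt hr hy h
  · rw [abs_sub_comm, abs_of_nonneg (sub_nonneg.2 (Real.rpow_le_rpow hx h (by positivity))),
      max_eq_right h, abs_sub_comm, abs_of_nonneg (sub_nonneg.2 h)]
    exact bl_mvt hr hx h

private lemma bl_key_eps {r : ℝ} (hr : 1 ≤ r) {ε : ℝ} (hε : 0 < ε) :
    ∃ C : ℝ, 0 ≤ C ∧ ∀ u v : ℝ, |(|u + v| ^ r - |u| ^ r)| ≤ ε * |u| ^ r + C * |v| ^ r := by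
  have hr0 : (0 : ℝ) < r := lt_of_lt_of_le one_pos hr
  have h2pos : (0 : ℝ) < 2 ^ (r - 1) := Real.rpow_pos_of_pos two_pos _
  set δ : ℝ := min 1 (ε / (r * 2 ^ (r - 1))) with hδdef
  have hδpos : 0 < δ := lt_min one_pos (div_pos hε (mul_pos hr0 h2pos))
  have hδ1 : δ ≤ 1 := min_le_left _ _
  have hδε : r * 2 ^ (r - 1) * δ ≤ ε := by
    have h2 : δ ≤ ε / (r * 2 ^ (r - 1)) := min_le_right _ _
    calc r * 2 ^ (r - 1) * δ ≤ r * 2 ^ (r - 1) * (ε / (r * 2 ^ (r - 1))) := by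
          apply mul_le_mul_of_nonneg_left h2; positivity
      _ = ε := by field_simp
  refine ⟨(1 / δ + 1) ^ r + (1 / δ) ^ r, by positivity, fun u v => ?_⟩
  rcases le_or_gt (δ * |u|) |v| with hcase | hcase
  · -- |u| ≤ |v| / δ
    have hu : |u| ≤ 1 / δ * |v| := by
      rw [one_div, inv_mul_eq_div, le_div_iff₀ hδpos, mul_comm]; exact hcase
    have h1 : |u + v| ≤ (1 / δ + 1) * |v| := by
      calc |u + v| ≤ |u| + |v| := abs_add_le _ _
        _ ≤ 1 / δ * |v| + |v| := by linarith
        _ = (1 / δ + 1) * |v| := by ring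
    have hb1 : |u + v| ^ r ≤ (1 / δ + 1) ^ r * |v| ^ r := by
      rw [← Real.mul_rpow (by positivity) (abs_nonneg v)]
      exact Real.rpow_le_rpow (abs_nonneg _) h1 hr0.le
    have hb2 : |u| ^ r ≤ (1 / δ) ^ r * |v| ^ r := by
      rw [← Real.mul_rpow (by positivity) (abs_nonneg v)]
      exact Real.rpow_le_rpow (abs_nonneg _) hu hr0.le
    have htri : |(|u + v| ^ r - |u| ^ r)| ≤ |u + v| ^ r + |u| ^ r := by
      have h1 : (0:ℝ) ≤ |u + v| ^ r := by positivity
      have h2 : (0:ℝ) ≤ |u| ^ r := by positivity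
      rw [abs_sub_le_iff]
      constructor <;> linarith
    have hεu : 0 ≤ ε * |u| ^ r := by positivity
    nlinarith [hb1, hb2, htri]
  · -- |v| < δ * |u|
    have hu0 : 0 < |u| := by
      by_contra h
      push_neg at h
      have : |u| = 0 := le_antisymm h (abs_nonneg u)
      rw [this, mul_zero] at hcase
      exact absurd hcase (not_lt.2 (abs_nonneg v))
    have hmax : max |u + v| |u| ≤ 2 * |u| := by
      refine max_le ?_ (by linarith)
      calc |u + v| ≤ |u| + |v| := abs_add_le _ _
        _ ≤ |u| + δ * |u| := by linarith
        _ ≤ 2 * |u| := by nlinarith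
    have hsub : |(|u + v| - |u|)| ≤ |v| := by
      calc |(|u + v| - |u|)| ≤ |u + v - u| := abs_abs_sub_abs_le_abs_sub _ _
        _ = |v| := by ring_nf
    have hmvt := bl_mvt_abs hr (abs_nonneg (u + v)) (abs_nonneg u)
    have hmono : (max |u + v| |u|) ^ (r - 1) ≤ 2 ^ (r - 1) * |u| ^ (r - 1) := by
      rw [← Real.mul_rpow (by norm_num) (abs_nonneg u)]
      exact Real.rpow_le_rpow (le_max_right _ _ |>.trans' (abs_nonneg u)) hmax (by linarith)
    have hrpow : |u| ^ (r - 1) * |u| = |u| ^ r := by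
      nth_rewrite 2 [← Real.rpow_one |u|]
      rw [← Real.rpow_add hu0]
      norm_num
    have hbound : |(|u + v| ^ r - |u| ^ r)| ≤ r * 2 ^ (r - 1) * δ * |u| ^ r := by
      calc |(|u + v| ^ r - |u| ^ r)| ≤ r * (max |u + v| |u|) ^ (r - 1) * |(|u + v| - |u|)| :=
            hmvt
        _ ≤ r * (2 ^ (r - 1) * |u| ^ (r - 1)) * |v| := by
            apply mul_le_mul ?_ hsub (abs_nonneg _) (by positivity)
            exact mul_le_mul_of_nonneg_left hmono hr0.le
        _ ≤ r * (2 ^ (r - 1) * |u| ^ (r - 1)) * (δ * |u|) := by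
            apply mul_le_mul_of_nonneg_left hcase.le (by positivity)
        _ = r * 2 ^ (r - 1) * δ * (|u| ^ (r - 1) * |u|) := by ring
        _ = r * 2 ^ (r - 1) * δ * |u| ^ r := by rw [hrpow]
    have : r * 2 ^ (r - 1) * δ * |u| ^ r ≤ ε * |u| ^ r :=
      mul_le_mul_of_nonneg_right hδε (by positivity)
    have hC : 0 ≤ ((1 / δ + 1) ^ r + (1 / δ) ^ r) * |v| ^ r := by positivity
    linarith

private lemma bl_add_rpow {p a b : ℝ} (hp : 0 ≤ p) (ha : 0 ≤ a) (hb : 0 ≤ b) :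
    (a + b) ^ p ≤ 2 ^ p * (a ^ p + b ^ p) := by
  have h1 : a + b ≤ 2 * max a b := by
    rcases le_total a b with h | h
    · rw [max_eq_right h]; linarith
    · rw [max_eq_left h]; linarith
  have hmax : 0 ≤ max a b := le_max_of_le_left ha
  calc (a + b) ^ p ≤ (2 * max a b) ^ p := Real.rpow_le_rpow (by positivity) h1 hp
    _ = 2 ^ p * (max a b) ^ p := Real.mul_rpow (by norm_num) hmax
    _ ≤ 2 ^ p * (a ^ p + b ^ p) := by
        apply mul_le_mul_of_nonneg_left ?_ (by positivity)
        rcases le_total a b with h | h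
        · rw [max_eq_right h]; nlinarith [Real.rpow_nonneg ha p]
        · rw [max_eq_left h]; nlinarith [Real.rpow_nonneg hb p]

theorem brezis_lieb_powers (N : ℕ) (Ω : Set (EuclideanSpace ℝ (Fin N)))
    (hΩ : MeasurableSet Ω) (t r : ℝ) (ht : 1 < t) (hr1 : 1 ≤ r) (hrt : r ≤ t)
    (w : ℕ → EuclideanSpace ℝ (Fin N) → ℝ) (wl : EuclideanSpace ℝ (Fin N) → ℝ)
    (hmeas : ∀ m, AEStronglyMeasurable (w m) (volume.restrict Ω))
    (hbdd : ∃ C : ℝ, ∀ m,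
      eLpNorm (w m) (ENNReal.ofReal t) (volume.restrict Ω) ≤ ENNReal.ofReal C)
    (hae : ∀ᵐ x ∂(volume.restrict Ω), Tendsto (fun m => w m x) atTop (nhds (wl x))) :
    Tendsto (fun m => ∫ x in Ω, |(|w m x| ^ r - |w m x - wl x| ^ r - |wl x| ^ r)| ^ (t / r))
      atTop (nhds 0) := by
  set μ := volume.restrict Ω with hμ
  obtain ⟨C, hC⟩ := hbdd
  have ht0 : (0:ℝ) < t := lt_trans one_pos ht
  have hr0 : (0:ℝ) < r := lt_of_lt_of_le one_pos hr1
  set q : ℝ := t / r with hqdef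
  have hq1 : 1 ≤ q := (one_le_div hr0).2 hrt
  have hq0 : (0:ℝ) < q := lt_of_lt_of_le one_pos hq1
  set p : ℝ≥0∞ := ENNReal.ofReal t with hpdef
  have hp1 : 1 ≤ p := ENNReal.one_le_ofReal.2 ht.le
  have hp_ne_zero : p ≠ 0 := by
    rw [hpdef]
    simp [ENNReal.ofReal_eq_zero, not_le, ht0]
  have hp_ne_top : p ≠ ∞ := ENNReal.ofReal_ne_top
  have hp_toReal : p.toReal = t := ENNReal.toReal_ofReal ht0.le
  have hwl_meas : AEStronglyMeasurable wl μ := aestronglyMeasurable_of_tendsto_ae atTop hmeas hae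
  have hwl_bound : eLpNorm wl p μ ≤ ENNReal.ofReal C := by
    refine le_trans (Lp.eLpNorm_lim_le_liminf_eLpNorm hmeas wl hae) ?_
    have h := Filter.liminf_le_liminf (f := atTop)
      (Filter.Eventually.of_forall (fun m => hC m))
    simpa [Filter.liminf_const] using h
  have hwl_mem : MemLp wl p μ := ⟨hwl_meas, hwl_bound.trans_lt ENNReal.ofReal_lt_top⟩
  have habs_pow : ∀ (s : ℝ), 0 ≤ s → ∀ f : EuclideanSpace ℝ (Fin N) → ℝ,
      AEStronglyMeasurable f μ → AEStronglyMeasurable (fun x => |f x| ^ s) μ := by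
    intro s hs f hf
    have h : AEStronglyMeasurable (fun x => ‖f x‖ ^ s) μ :=
      (Real.continuous_rpow_const hs).comp_aestronglyMeasurable hf.norm
    simpa [Real.norm_eq_abs] using h
  have hF_meas : ∀ m, AEStronglyMeasurable
      (fun x => |w m x| ^ r - |w m x - wl x| ^ r - |wl x| ^ r) μ := fun m =>
    ((habs_pow r hr0.le _ (hmeas m)).sub (habs_pow r hr0.le _ ((hmeas m).sub hwl_meas))).sub
      (habs_pow r hr0.le wl hwl_meas)
  have hFq_meas : ∀ m, AEStronglyMeasurable
      (fun x => |(|w m x| ^ r - |w m x - wl x| ^ r - |wl x| ^ r)| ^ q) μ := fun m =>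
    habs_pow q hq0.le _ (hF_meas m)
  have hdiff_meas : ∀ m, AEStronglyMeasurable (fun x => |w m x - wl x| ^ t) μ :=
    fun m => habs_pow t ht0.le _ ((hmeas m).sub hwl_meas)
  have hIwl : Integrable (fun x => |wl x| ^ t) μ := by
    have h := hwl_mem.integrable_norm_rpow hp_ne_zero hp_ne_top
    simpa [Real.norm_eq_abs, hp_toReal] using h
  have hIdiff : ∀ m, Integrable (fun x => |w m x - wl x| ^ t) μ := by
    intro m
    have hmem : MemLp (fun x => w m x - wl x) p μ :=
      MemLp.sub ⟨hmeas m, (hC m).trans_lt ENNReal.ofReal_lt_top⟩ hwl_mem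
    have h := hmem.integrable_norm_rpow hp_ne_zero hp_ne_top
    simpa [Real.norm_eq_abs, hp_toReal] using h
  set M : ℝ := ((ENNReal.ofReal C + ENNReal.ofReal C) ^ t).toReal with hMdef
  have hM0 : 0 ≤ M := ENNReal.toReal_nonneg
  have hM : ∀ m, ∫ x, |w m x - wl x| ^ t ∂μ ≤ M := by
    intro m
    have h1 : eLpNorm (fun x => w m x - wl x) p μ ≤ ENNReal.ofReal C + ENNReal.ofReal C := by
      refine le_trans ?_ (add_le_add (hC m) hwl_bound)
      exact eLpNorm_sub_le (hmeas m) hwl_meas hp1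
    have h2 : ∫⁻ x, (‖w m x - wl x‖₊ : ℝ≥0∞) ^ t ∂μ =
        (eLpNorm (fun x => w m x - wl x) p μ) ^ t := by
      rw [eLpNorm_eq_lintegral_rpow_enorm_toReal hp_ne_zero hp_ne_top, hp_toReal, one_div,
        ← ENNReal.rpow_mul, inv_mul_cancel₀ ht0.ne', ENNReal.rpow_one]
      rfl
    have h3 : ∫ x, |w m x - wl x| ^ t ∂μ =
        (∫⁻ x, (‖w m x - wl x‖₊ : ℝ≥0∞) ^ t ∂μ).toReal := by
      rw [integral_eq_lintegral_of_nonneg_ae (Filter.Eventually.of_forall fun x => by positivity)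
        (hdiff_meas m)]
      congr 1
      refine lintegral_congr fun x => ?_
      rw [← enorm_eq_nnnorm, ← ofReal_norm, Real.norm_eq_abs,
        ← ENNReal.ofReal_rpow_of_nonneg (abs_nonneg _) ht0.le]
    rw [h3, hMdef]
    apply ENNReal.toReal_mono (ENNReal.rpow_ne_top_of_nonneg ht0.le
      (ENNReal.add_ne_top.2 ⟨ENNReal.ofReal_ne_top, ENNReal.ofReal_ne_top⟩))
    rw [h2]
    exact ENNReal.rpow_le_rpow h1 ht0.le
  have claim : ∀ ε' : ℝ, 0 < ε' → ∃ D : ℝ, 0 ≤ D ∧ ∀ a b : ℝ,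
      |(|a| ^ r - |a - b| ^ r - |b| ^ r)| ^ q ≤ ε' * |a - b| ^ t + D * |b| ^ t := by
    intro ε' hε'
    have h2q : (0:ℝ) < 2 ^ q := Real.rpow_pos_of_pos two_pos q
    set ε : ℝ := (ε' / 2 ^ q) ^ q⁻¹ with hεdef
    have hεpos : 0 < ε := Real.rpow_pos_of_pos (div_pos hε' h2q) _
    obtain ⟨C₀, hC₀, hkey⟩ := bl_key_eps hr1 hεpos
    refine ⟨2 ^ q * (C₀ + 1) ^ q, by positivity, fun a b => ?_⟩
    have hεq : ε ^ q = ε' / 2 ^ q := Real.rpow_inv_rpow (by positivity) hq0.ne'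
    have hk := hkey (a - b) b
    rw [sub_add_cancel] at hk
    have step1 : |(|a| ^ r - |a - b| ^ r - |b| ^ r)| ≤ ε * |a - b| ^ r + (C₀ + 1) * |b| ^ r := by
      have h2 : (0:ℝ) ≤ |b| ^ r := by positivity
      have htri : |(|a| ^ r - |a - b| ^ r - |b| ^ r)| ≤ |(|a| ^ r - |a - b| ^ r)| + |b| ^ r := by
        have h := abs_sub (|a| ^ r - |a - b| ^ r) (|b| ^ r)
        rwa [abs_of_nonneg h2] at h
      linarith
    have hrq : r * q = t := by rw [hqdef]; field_simp
    have step2 : |(|a| ^ r - |a - b| ^ r - |b| ^ r)| ^ q ≤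
        (ε * |a - b| ^ r + (C₀ + 1) * |b| ^ r) ^ q :=
      Real.rpow_le_rpow (abs_nonneg _) step1 hq0.le
    have step3 : (ε * |a - b| ^ r + (C₀ + 1) * |b| ^ r) ^ q ≤
        2 ^ q * ((ε * |a - b| ^ r) ^ q + ((C₀ + 1) * |b| ^ r) ^ q) :=
      bl_add_rpow hq0.le (by positivity) (by positivity)
    have e1 : (ε * |a - b| ^ r) ^ q = ε ^ q * |a - b| ^ t := by
      rw [Real.mul_rpow hεpos.le (by positivity), ← Real.rpow_mul (abs_nonneg _), hrq]
    have e2 : ((C₀ + 1) * |b| ^ r) ^ q = (C₀ + 1) ^ q * |b| ^ t := by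
      rw [Real.mul_rpow (by positivity) (by positivity), ← Real.rpow_mul (abs_nonneg _), hrq]
    have efin : 2 ^ q * (ε ^ q * |a - b| ^ t + (C₀ + 1) ^ q * |b| ^ t)
        = ε' * |a - b| ^ t + 2 ^ q * (C₀ + 1) ^ q * |b| ^ t := by
      rw [hεq]; field_simp
    rw [e1, e2] at step3
    linarith [step2, step3, efin.le, efin.ge]
  rw [Metric.tendsto_atTop]
  intro δ hδ
  set ε' : ℝ := δ / (2 * (M + 1)) with hε'def
  have hε'pos : 0 < ε' := by positivity
  obtain ⟨D, hD0, hDkey⟩ := claim ε' hε'pos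
  set g : ℕ → EuclideanSpace ℝ (Fin N) → ℝ := fun m x =>
    max (|(|w m x| ^ r - |w m x - wl x| ^ r - |wl x| ^ r)| ^ q
      - ε' * |w m x - wl x| ^ t) 0 with hgdef
  have hg_meas : ∀ m, AEStronglyMeasurable (g m) μ := fun m =>
    ((hFq_meas m).sub ((hdiff_meas m).const_mul ε')).sup aestronglyMeasurable_const
  have hg_nonneg : ∀ m x, 0 ≤ g m x := fun m x => le_max_right _ _
  have hg_le : ∀ m x, g m x ≤ D * |wl x| ^ t := by
    intro m x
    apply max_le ?_ (by positivity)
    have h := hDkey (w m x) (wl x)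
    linarith
  have hg_bound : ∀ m, ∀ᵐ x ∂μ, ‖g m x‖ ≤ D * |wl x| ^ t := fun m =>
    Filter.Eventually.of_forall fun x => by
      rw [Real.norm_eq_abs, abs_of_nonneg (hg_nonneg m x)]; exact hg_le m x
  have hg_lim : ∀ᵐ x ∂μ, Tendsto (fun m => g m x) atTop (nhds 0) := by
    filter_upwards [hae] with x hx
    have habs_r : Continuous fun y : ℝ => |y| ^ r :=
      (Real.continuous_rpow_const hr0.le).comp continuous_abs
    have habs_q : Continuous fun y : ℝ => |y| ^ q :=
      (Real.continuous_rpow_const hq0.le).comp continuous_abs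
    have h1 : Tendsto (fun m => |w m x| ^ r) atTop (nhds (|wl x| ^ r)) :=
      (habs_r.tendsto _).comp hx
    have h2 : Tendsto (fun m => w m x - wl x) atTop (nhds 0) := by
      simpa using hx.sub (tendsto_const_nhds (x := wl x))
    have h3 : Tendsto (fun m => |w m x - wl x| ^ r) atTop (nhds 0) := by
      have h := (habs_r.tendsto 0).comp h2
      simpa [Function.comp_def, abs_zero, Real.zero_rpow hr0.ne'] using h
    have hF : Tendsto (fun m => |w m x| ^ r - |w m x - wl x| ^ r - |wl x| ^ r)
        atTop (nhds 0) := by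
      have h := (h1.sub h3).sub (tendsto_const_nhds (x := |wl x| ^ r))
      simpa using h
    have hFq : Tendsto (fun m => |(|w m x| ^ r - |w m x - wl x| ^ r - |wl x| ^ r)| ^ q)
        atTop (nhds 0) := by
      have h := (habs_q.tendsto 0).comp hF
      simpa [Function.comp_def, abs_zero, Real.zero_rpow hq0.ne'] using h
    refine squeeze_zero (fun m => hg_nonneg m x) (fun m => ?_) hFq
    apply max_le ?_ (by positivity)
    have h : 0 ≤ ε' * |w m x - wl x| ^ t := by positivity
    linarith
  have htend := tendsto_integral_of_dominated_convergence (μ := μ) (fun x => D * |wl x| ^ t)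
    hg_meas (hIwl.const_mul D) hg_bound hg_lim
  rw [MeasureTheory.integral_zero] at htend
  rw [Metric.tendsto_atTop] at htend
  obtain ⟨K, hK⟩ := htend (δ / 2) (by positivity)
  refine ⟨K, fun n hn => ?_⟩
  have hIg : Integrable (g n) μ := (hIwl.const_mul D).mono' (hg_meas n) (hg_bound n)
  have hIFq : Integrable (fun x => |(|w n x| ^ r - |w n x - wl x| ^ r - |wl x| ^ r)| ^ q) μ := by
    refine (((hIdiff n).const_mul ε').add (hIwl.const_mul D)).mono' (hFq_meas n) ?_
    refine Filter.Eventually.of_forall fun x => ?_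
    rw [Real.norm_eq_abs, abs_of_nonneg (by positivity)]
    exact hDkey (w n x) (wl x)
  have hle : ∫ x, |(|w n x| ^ r - |w n x - wl x| ^ r - |wl x| ^ r)| ^ q ∂μ ≤
      ∫ x, (g n x + ε' * |w n x - wl x| ^ t) ∂μ := by
    refine integral_mono hIFq (hIg.add ((hIdiff n).const_mul ε')) fun x => ?_
    have h1 := le_max_left (|(|w n x| ^ r - |w n x - wl x| ^ r - |wl x| ^ r)| ^ q
      - ε' * |w n x - wl x| ^ t) 0
    have hgx : g n x = max (|(|w n x| ^ r - |w n x - wl x| ^ r - |wl x| ^ r)| ^ q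
      - ε' * |w n x - wl x| ^ t) 0 := rfl
    simp only [hgx]
    linarith
  have heq2 : ∫ x, (g n x + ε' * |w n x - wl x| ^ t) ∂μ
      = ∫ x, g n x ∂μ + ε' * ∫ x, |w n x - wl x| ^ t ∂μ := by
    rw [integral_add hIg ((hIdiff n).const_mul ε')]
    congr 1
    rw [show (fun x => ε' * |w n x - wl x| ^ t) = fun x => ε' • |w n x - wl x| ^ t from rfl,
      integral_smul, smul_eq_mul]
  have hnonneg : 0 ≤ ∫ x, |(|w n x| ^ r - |w n x - wl x| ^ r - |wl x| ^ r)| ^ q ∂μ :=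
    integral_nonneg fun x => by positivity
  have hKn := hK n hn
  rw [Real.dist_eq, sub_zero] at hKn
  rw [Real.dist_eq, sub_zero, abs_of_nonneg hnonneg]
  have hgn_lt : ∫ x, g n x ∂μ < δ / 2 := lt_of_abs_lt hKn
  have hεM : ε' * ∫ x, |w n x - wl x| ^ t ∂μ ≤ δ / 2 := by
    have h1 : ε' * ∫ x, |w n x - wl x| ^ t ∂μ ≤ ε' * M :=
      mul_le_mul_of_nonneg_left (hM n) hε'pos.le
    have h2 : ε' * M ≤ δ / 2 := by
      rw [hε'def, div_mul_eq_mul_div, div_le_div_iff₀ (by positivity) (by norm_num)]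
      nlinarith
    linarith
  calc ∫ x, |(|w n x| ^ r - |w n x - wl x| ^ r - |wl x| ^ r)| ^ q ∂μ
      ≤ ∫ x, g n x ∂μ + ε' * ∫ x, |w n x - wl x| ^ t ∂μ := heq2 ▸ hle
    _ < δ / 2 + δ / 2 := by linarith
    _ = δ := by ring
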